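/- Upper bound for the stretched exponential moment by the weighted tail density: Let α > 0 and 0 < μ < 1. Then for every non-negative summable sequence (c_i)_{i≥1} with tail density (G_j)_{j≥1}, one has ∑_{i≥1} exp(α i^μ) c_i ≤ max(1, 2^{1−μ} α μ) · ∑_{j≥1} j^{μ−1} exp(α j^μ) G_j (the inequality being understood in [0,∞]). -/

import Mathlib

open Real Finset

lemma key_lemma (α μ : ℝ) (hα : 0 < α) (hμ0 : 0 < μ) (hμ1 : μ < 1) (n : ℕ) :
    Real.exp (α * ((n : ℝ) + 1) ^ μ) ≤ max 1 ((2 : ℝ) ^ (1 - μ) * α * μ) *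
      ∑ j ∈ Finset.range (n + 1), ((j : ℝ) + 1) ^ (μ - 1) * Real.exp (α * ((j : ℝ) + 1) ^ μ) := by
  set M := max 1 ((2 : ℝ) ^ (1 - μ) * α * μ) with hM
  have hM1 : (1 : ℝ) ≤ M := le_max_left _ _
  induction n with
  | zero =>
      simp only [Nat.cast_zero, zero_add, Finset.sum_range_one, Real.one_rpow, one_mul]
      nlinarith [Real.exp_pos (α * 1)]
  | succ n ih =>
      rw [Finset.sum_range_succ, mul_add]
      have ha : (1 : ℝ) ≤ (n : ℝ) + 1 := by have := Nat.cast_nonneg (α := ℝ) n; linarith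
      set a : ℝ := (n : ℝ) + 1 with hadef
      have hb : ((n + 1 : ℕ) : ℝ) + 1 = a + 1 := by push_cast; ring
      rw [hb]
      have ha0 : 0 < a := by linarith
      have hab : a + 1 ≤ 2 * a := by linarith
      -- (i) (a+1)^μ - a^μ ≤ μ * a^(μ-1)
      have hi : (a + 1) ^ μ ≤ a ^ μ + μ * a ^ (μ - 1) := by
        have h1 : a + 1 = a * (1 + 1 / a) := by field_simp
        have h2 : ((1 : ℝ) + 1 / a) ^ μ ≤ 1 + μ * (1 / a) :=
          rpow_one_add_le_one_add_mul_self
            (by have : (0:ℝ) < 1 / a := by positivity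
                linarith) hμ0.le hμ1.le
        calc (a + 1) ^ μ = a ^ μ * (1 + 1 / a) ^ μ := by
              rw [h1, Real.mul_rpow ha0.le (by positivity)]
          _ ≤ a ^ μ * (1 + μ * (1 / a)) := by
              apply mul_le_mul_of_nonneg_left h2 (by positivity)
          _ = a ^ μ + μ * (a ^ μ / a) := by ring
          _ = a ^ μ + μ * a ^ (μ - 1) := by
              rw [Real.rpow_sub ha0, Real.rpow_one]
      -- (ii) a^(μ-1) ≤ 2^(1-μ) * (a+1)^(μ-1)
      have hii : a ^ (μ - 1) ≤ 2 ^ (1 - μ) * (a + 1) ^ (μ - 1) := by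
        have h3 : (a + 1) ^ (1 - μ) ≤ 2 ^ (1 - μ) * a ^ (1 - μ) := by
          rw [← Real.mul_rpow (by norm_num) ha0.le]
          exact Real.rpow_le_rpow (by positivity) hab (by linarith)
        have e1 : a ^ (μ - 1) = (a ^ (1 - μ))⁻¹ := by
          rw [show μ - 1 = -(1 - μ) by ring, Real.rpow_neg ha0.le]
        have e2 : (a + 1) ^ (μ - 1) = ((a + 1) ^ (1 - μ))⁻¹ := by
          rw [show μ - 1 = -(1 - μ) by ring, Real.rpow_neg (by positivity)]
        have pa : (0:ℝ) < a ^ (1 - μ) := by positivity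
        have pb : (0:ℝ) < (a + 1) ^ (1 - μ) := by positivity
        rw [e1, e2]
        rw [show (2:ℝ) ^ (1 - μ) * ((a + 1) ^ (1 - μ))⁻¹ = 2 ^ (1 - μ) / (a + 1) ^ (1 - μ) by
          rw [div_eq_mul_inv], show (a ^ (1 - μ))⁻¹ = 1 / a ^ (1 - μ) by rw [one_div]]
        rw [div_le_div_iff₀ pa pb]
        nlinarith [h3]
      -- (iii) exp diff bound
      have hmono : a ^ μ ≤ (a + 1) ^ μ := Real.rpow_le_rpow ha0.le (by linarith) hμ0.le
      have gen : ∀ X Y : ℝ, Y ≤ X → Real.exp X - Real.exp Y ≤ (X - Y) * Real.exp X := by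
        intro X Y _
        have h4 : (Y - X) + 1 ≤ Real.exp (Y - X) := Real.add_one_le_exp _
        have h5 : Real.exp Y = Real.exp X * Real.exp (Y - X) := by
          rw [← Real.exp_add]; ring_nf
        nlinarith [mul_le_mul_of_nonneg_left h4 (Real.exp_pos X).le, h5, Real.exp_pos X]
      have hiii : Real.exp (α * (a + 1) ^ μ) - Real.exp (α * a ^ μ) ≤
          α * ((a + 1) ^ μ - a ^ μ) * Real.exp (α * (a + 1) ^ μ) := by
        have h := gen (α * (a + 1) ^ μ) (α * a ^ μ)
          (mul_le_mul_of_nonneg_left hmono hα.le)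
        calc Real.exp (α * (a + 1) ^ μ) - Real.exp (α * a ^ μ)
            ≤ (α * (a + 1) ^ μ - α * a ^ μ) * Real.exp (α * (a + 1) ^ μ) := h
          _ = α * ((a + 1) ^ μ - a ^ μ) * Real.exp (α * (a + 1) ^ μ) := by ring
      -- combine
      have hbpos : (0:ℝ) < (a+1)^(μ-1) := by positivity
      have hexp : (0:ℝ) < Real.exp (α * (a + 1) ^ μ) := Real.exp_pos _
      have hdiff : Real.exp (α * (a + 1) ^ μ) - Real.exp (α * a ^ μ) ≤
          M * ((a + 1) ^ (μ - 1) * Real.exp (α * (a + 1) ^ μ)) := by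
        have c1 : α * ((a + 1) ^ μ - a ^ μ) ≤ α * (μ * a ^ (μ - 1)) :=
          mul_le_mul_of_nonneg_left (by linarith) hα.le
        have c2 : α * (μ * a ^ (μ - 1)) ≤ α * (μ * (2 ^ (1 - μ) * (a + 1) ^ (μ - 1))) :=
          mul_le_mul_of_nonneg_left (mul_le_mul_of_nonneg_left hii hμ0.le) hα.le
        have c3 : α * (μ * (2 ^ (1 - μ) * (a + 1) ^ (μ - 1))) =
            (2 ^ (1 - μ) * α * μ) * (a + 1) ^ (μ - 1) := by ring
        have c4 : (2 ^ (1 - μ) * α * μ) ≤ M := le_max_right _ _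
        have c5 : α * ((a + 1) ^ μ - a ^ μ) * Real.exp (α * (a + 1) ^ μ) ≤
            (M * (a + 1) ^ (μ - 1)) * Real.exp (α * (a + 1) ^ μ) := by
          apply mul_le_mul_of_nonneg_right _ hexp.le
          calc α * ((a + 1) ^ μ - a ^ μ) ≤ (2 ^ (1 - μ) * α * μ) * (a + 1) ^ (μ - 1) := by
                rw [← c3]; exact c1.trans c2
            _ ≤ M * (a + 1) ^ (μ - 1) := mul_le_mul_of_nonneg_right c4 hbpos.le
        calc Real.exp (α * (a + 1) ^ μ) - Real.exp (α * a ^ μ) ≤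
              α * ((a + 1) ^ μ - a ^ μ) * Real.exp (α * (a + 1) ^ μ) := hiii
          _ ≤ (M * (a + 1) ^ (μ - 1)) * Real.exp (α * (a + 1) ^ μ) := c5
          _ = M * ((a + 1) ^ (μ - 1) * Real.exp (α * (a + 1) ^ μ)) := by ring
      linarith [ih]




/-!
STATEMENT 14: Upper bound for the stretched exponential moment by the
weighted tail density.

Let `α > 0` and `0 < μ < 1`. For every non-negative summable sequence
`(c_i)_{i ≥ 1}` with tail density `G_j = ∑_{i ≥ j} c_i`,
`∑_{i ≥ 1} exp(α i^μ) c_i ≤ max(1, 2^{1-μ} α μ) ∑_{j ≥ 1} j^{μ-1} exp(α j^μ) G_j`,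
the inequality understood in `[0,∞]`.

Sequences are indexed by `ℕ` with the relevant entries `c (i+1)`, `i : ℕ`,
corresponding to `c_i`, `i ≥ 1`.
-/

theorem stretched_exponential_moment_upper_bound
    (α μ : ℝ) (hα : 0 < α) (hμ0 : 0 < μ) (hμ1 : μ < 1)
    (c : ℕ → ℝ)
    (hc : ∀ i : ℕ, 0 ≤ c (i + 1))
    (hsumm : Summable fun i : ℕ => c (i + 1)) :
    (∑' i : ℕ, ENNReal.ofReal (Real.exp (α * ((i : ℝ) + 1) ^ μ) * c (i + 1)))
      ≤ ENNReal.ofReal (max 1 ((2 : ℝ) ^ (1 - μ) * α * μ)) *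
          ∑' j : ℕ, ENNReal.ofReal
            (((j : ℝ) + 1) ^ (μ - 1) * Real.exp (α * ((j : ℝ) + 1) ^ μ) *
              ∑' i : ℕ, c (j + 1 + i)) := by
  set M := max 1 ((2 : ℝ) ^ (1 - μ) * α * μ) with hMdef
  have hM0 : (0 : ℝ) ≤ M := le_trans zero_le_one (le_max_left _ _)
  set f : ℕ → ℝ := fun j => ((j : ℝ) + 1) ^ (μ - 1) * Real.exp (α * ((j : ℝ) + 1) ^ μ)
    with hfdef
  have hf0 : ∀ j, 0 ≤ f j := fun j => by positivity
  have hsummj : ∀ j : ℕ, Summable fun k : ℕ => c (j + 1 + k) := by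
    intro j
    have h := (summable_nat_add_iff (f := fun i : ℕ => c (i + 1)) j).2 hsumm
    convert h using 2 with k
    congr 1
    congr 1
    omega
  -- step 1
  have step1 : (∑' i : ℕ, ENNReal.ofReal (Real.exp (α * ((i : ℝ) + 1) ^ μ) * c (i + 1)))
      ≤ ∑' i : ℕ, ENNReal.ofReal ((M * ∑ j ∈ Finset.range (i + 1), f j) * c (i + 1)) := by
    apply ENNReal.tsum_le_tsum
    intro i
    exact ENNReal.ofReal_le_ofReal (mul_le_mul_of_nonneg_right (key_lemma α μ hα hμ0 hμ1 i) (hc i))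
  refine step1.trans ?_
  -- rewrite each term
  have step2 : ∀ i : ℕ, ENNReal.ofReal ((M * ∑ j ∈ Finset.range (i + 1), f j) * c (i + 1))
      = ENNReal.ofReal M *
        ∑' j : ℕ, if j ≤ i then ENNReal.ofReal (f j * c (i + 1)) else 0 := by
    intro i
    rw [mul_assoc, ENNReal.ofReal_mul hM0]
    congr 1
    rw [Finset.sum_mul, ENNReal.ofReal_sum_of_nonneg (fun j _ => by
      exact mul_nonneg (hf0 j) (hc i))]
    rw [tsum_eq_sum (s := Finset.range (i + 1)) (by
      intro j hj
      rw [if_neg]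
      simp only [Finset.mem_range] at hj
      omega)]
    apply Finset.sum_congr rfl
    intro j hj
    simp only [Finset.mem_range] at hj
    rw [if_pos (by omega)]
  simp_rw [step2]
  rw [ENNReal.tsum_mul_left]
  apply mul_le_mul_right
  rw [ENNReal.tsum_comm]
  apply ENNReal.tsum_le_tsum
  intro j
  have reindex : (∑' i : ℕ, if j ≤ i then ENNReal.ofReal (f j * c (i + 1)) else 0)
      = ∑' k : ℕ, ENNReal.ofReal (f j * c (j + 1 + k)) := by
    rw [← Function.Injective.tsum_eq (g := fun k : ℕ => j + k)
      (add_right_injective j)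
      (f := fun i => if j ≤ i then ENNReal.ofReal (f j * c (i + 1)) else 0)
      (by
        intro x hx
        simp only [Function.mem_support, ne_eq, ite_eq_right_iff, not_forall] at hx
        obtain ⟨hle, -⟩ := hx
        exact ⟨x - j, show j + (x - j) = x by omega⟩)]
    apply tsum_congr
    intro k
    rw [if_pos (Nat.le_add_right j k)]
    have h : j + k + 1 = j + 1 + k := by omega
    rw [h]
  rw [reindex]
  have hcnn : ∀ k : ℕ, 0 ≤ c (j + 1 + k) := by
    intro k
    have := hc (j + k)
    convert this using 2
    omega
  calc (∑' k : ℕ, ENNReal.ofReal (f j * c (j + 1 + k)))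
      = ∑' k : ℕ, ENNReal.ofReal (f j) * ENNReal.ofReal (c (j + 1 + k)) := by
        apply tsum_congr; intro k; rw [ENNReal.ofReal_mul (hf0 j)]
    _ = ENNReal.ofReal (f j) * ∑' k : ℕ, ENNReal.ofReal (c (j + 1 + k)) := by
        rw [ENNReal.tsum_mul_left]
    _ = ENNReal.ofReal (f j) * ENNReal.ofReal (∑' k : ℕ, c (j + 1 + k)) := by
        rw [ENNReal.ofReal_tsum_of_nonneg hcnn (hsummj j)]
    _ = ENNReal.ofReal (f j * ∑' k : ℕ, c (j + 1 + k)) := by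
        rw [← ENNReal.ofReal_mul (hf0 j)]
    _ ≤ ENNReal.ofReal (((j : ℝ) + 1) ^ (μ - 1) * Real.exp (α * ((j : ℝ) + 1) ^ μ) *
          ∑' i : ℕ, c (j + 1 + i)) := le_of_eq rfl
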